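/- In the deterministic-tree setup: for every R_c-limit point v0, the relation ⊏ on P_{v0} defined by w1 ⊏ w2 iff w1 ≠ w2 and w2 lies in the T-cone of w1 is a strict linear order on P_{v0} of order type ω, i.e. (P_{v0}, ⊏) is order-isomorphic to (ℕ, <). -/

import Mathlib

/-- Edge relation of the reversal `R(G)` of a graph `G` with edge set `E` over
the color set `D`: colors are `D ⊕ D` (original colors `Sum.inl d` and fresh
inverse colors `Sum.inr d = d⁻`). -/
def RevEdge {V D : Type*} (E : Set (V × D × V)) : V → (D ⊕ D) → V → Prop
  | v, Sum.inl d, w => (v, d, w) ∈ E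
  | v, Sum.inr d, w => (w, d, v) ∈ E

/-- `Marks E v α w`: the word `α` over `D ⊕ D⁻` marks a path from `v` to `w`
in the reversal `R(G)` of the graph with edge set `E`. -/
def Marks {V D : Type*} (E : Set (V × D × V)) : V → List (D ⊕ D) → V → Prop
  | v, [], w => v = w
  | v, c :: α, w => ∃ u, RevEdge E v c u ∧ Marks E u α w

/-- `IsEdgePath E v l w`: the list of edges `l` forms a directed path from `v`
to `w` in the graph with edge set `E`. -/
def IsEdgePath {V D : Type*} (E : Set (V × D × V)) : V → List (V × D × V) → V → Prop
  | v, [], w => v = w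
  | v, e :: l, w => e ∈ E ∧ e.1 = v ∧ IsEdgePath E e.2.2 l w

/-- A graph is a tree if it has a root from which every vertex is reachable by
a unique directed path. -/
def IsTree {V D : Type*} (E : Set (V × D × V)) : Prop :=
  ∃ r : V, ∀ v : V, ∃! l : List (V × D × V), IsEdgePath E r l v

/-- The cone of a vertex `v`: the set of vertices reachable from `v` by a
directed path (including `v` itself). -/
def Cone {V D : Type*} (E : Set (V × D × V)) (v : V) : Set V :=
  {w | ∃ l : List (V × D × V), IsEdgePath E v l w}

/-- `AutRun Δ q α q'`: the nondeterministic finite automaton with transition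
relation `Δ` can go from state `q` to state `q'` reading the word `α`. -/
def AutRun {D Q : Type*} (Δ : Set (Q × (D ⊕ D) × Q)) : Q → List (D ⊕ D) → Q → Prop
  | q, [], q' => q = q'
  | q, c :: α, q' => ∃ q'', (q, c, q'') ∈ Δ ∧ AutRun Δ q'' α q'

/-- The automaton with transition relation `Δ` can switch from state `q1` to
state `q2` on a path from `v1` to `v2`: some word over `D ⊕ D⁻` marks a path
from `v1` to `v2` in `R(T)` and takes the automaton from `q1` to `q2`. -/
def Switch {V D Q : Type*} (E : Set (V × D × V)) (Δ : Set (Q × (D ⊕ D) × Q))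
    (q1 q2 : Q) (v1 v2 : V) : Prop :=
  ∃ α : List (D ⊕ D), Marks E v1 α v2 ∧ AutRun Δ q1 α q2

/-- The vertex-pair type of `(v1, v2)`: the pair of sets of state pairs
`(q1, q2)` such that the automaton can switch from `q1` to `q2` on a path from
`v1` to `v2` (resp. from `v2` to `v1`). -/
def pairType {V D Q : Type*} (E : Set (V × D × V)) (Δ : Set (Q × (D ⊕ D) × Q))
    (v1 v2 : V) : Set (Q × Q) × Set (Q × Q) :=
  ({q | Switch E Δ q.1 q.2 v1 v2}, {q | Switch E Δ q.1 q.2 v2 v1})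

/-- A graph is deterministic if for every vertex and color there is at most
one outgoing edge of that color. -/
def IsDeterministic {V D : Type*} (E : Set (V × D × V)) : Prop :=
  ∀ (v : V) (d : D) (w w' : V), (v, d, w) ∈ E → (v, d, w') ∈ E → w = w'

/-- `v0` is a limit point of the strict (well-)order `R`: it is not the least
element and it is the supremum of the elements strictly below it. -/
def IsLimitPt {V : Type*} (R : V → V → Prop) (v0 : V) : Prop :=
  (∃ v, R v v0) ∧ ∀ v, R v v0 → ∃ w, R v w ∧ R w v0

/-- A set `B` is `R`-cofinal in `v0`: all its elements are strictly `R`-below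
`v0` and `sup_R B = v0`. -/
def CofinalIn {V : Type*} (R : V → V → Prop) (B : Set V) (v0 : V) : Prop :=
  (∀ b ∈ B, R b v0) ∧ ∀ v, R v v0 → ∃ b ∈ B, (b = v ∨ R v b)

/-- `S_{v0}`: the set of vertices whose `T`-cone contains a subset cofinal
in `v0`. -/
def Sset {V D : Type*} (E : Set (V × D × V)) (R : V → V → Prop) (v0 : V) : Set V :=
  {v | ∃ B ⊆ Cone E v, CofinalIn R B v0}

/-- `P_{v0}`: the set of vertices of `S_{v0}` whose `T`-cone does not
contain `v0`. -/
def Pset {V D : Type*} (E : Set (V × D × V)) (R : V → V → Prop) (v0 : V) : Set V :=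
  {v | v ∈ Sset E R v0 ∧ v0 ∉ Cone E v}

section TreeOmegaAux

variable {V D Q : Type*}

@[simp] lemma isEdgePath_nil {E : Set (V × D × V)} {v w : V} :
    IsEdgePath E v [] w ↔ v = w := Iff.rfl

@[simp] lemma isEdgePath_cons {E : Set (V × D × V)} {v w : V} {e : V × D × V}
    {l : List (V × D × V)} :
    IsEdgePath E v (e :: l) w ↔ e ∈ E ∧ e.1 = v ∧ IsEdgePath E e.2.2 l w := Iff.rfl

@[simp] lemma marks_nil {E : Set (V × D × V)} {v w : V} :
    Marks E v [] w ↔ v = w := Iff.rfl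

@[simp] lemma marks_cons {E : Set (V × D × V)} {v w : V} {c : D ⊕ D} {α : List (D ⊕ D)} :
    Marks E v (c :: α) w ↔ ∃ u, RevEdge E v c u ∧ Marks E u α w := Iff.rfl

@[simp] lemma autRun_nil {Δ : Set (Q × (D ⊕ D) × Q)} {q q' : Q} :
    AutRun Δ q [] q' ↔ q = q' := Iff.rfl

@[simp] lemma autRun_cons {Δ : Set (Q × (D ⊕ D) × Q)} {q q' : Q} {c : D ⊕ D}
    {α : List (D ⊕ D)} :
    AutRun Δ q (c :: α) q' ↔ ∃ q'', (q, c, q'') ∈ Δ ∧ AutRun Δ q'' α q' := Iff.rfl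

lemma path_end {E : Set (V × D × V)} {l : List (V × D × V)} :
    ∀ {v w w' : V}, IsEdgePath E v l w → IsEdgePath E v l w' → w = w' := by
  induction l with
  | nil => intro v w w' h h'; exact h.symm.trans h'
  | cons e l ih => intro v w w' h h'; exact ih h.2.2 h'.2.2

lemma path_append {E : Set (V × D × V)} {l1 : List (V × D × V)} :
    ∀ {l2 : List (V × D × V)} {v u w : V},
      IsEdgePath E v l1 u → IsEdgePath E u l2 w → IsEdgePath E v (l1 ++ l2) w := by
  induction l1 with
  | nil => intro l2 v u w h h'; cases h; exact h'
  | cons e l ih => intro l2 v u w h h'; exact ⟨h.1, h.2.1, ih h.2.2 h'⟩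

lemma path_split {E : Set (V × D × V)} {l1 : List (V × D × V)} :
    ∀ {l2 : List (V × D × V)} {v w : V},
      IsEdgePath E v (l1 ++ l2) w → ∃ u, IsEdgePath E v l1 u ∧ IsEdgePath E u l2 w := by
  induction l1 with
  | nil => intro l2 v w h; exact ⟨v, rfl, h⟩
  | cons e l ih =>
      intro l2 v w h
      obtain ⟨u, h1, h2⟩ := ih h.2.2
      exact ⟨u, ⟨h.1, h.2.1, h1⟩, h2⟩

lemma cone_refl (E : Set (V × D × V)) (v : V) : v ∈ Cone E v := ⟨[], rfl⟩

lemma cone_trans {E : Set (V × D × V)} {v w x : V}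
    (h1 : w ∈ Cone E v) (h2 : x ∈ Cone E w) : x ∈ Cone E v := by
  obtain ⟨l1, h1⟩ := h1; obtain ⟨l2, h2⟩ := h2
  exact ⟨l1 ++ l2, path_append h1 h2⟩

end TreeOmegaAux
section TreeOmegaAux2

variable {V D Q : Type*} {E : Set (V × D × V)} {r : V}
variable (hr : ∀ v : V, ∃! l : List (V × D × V), IsEdgePath E r l v)

include hr

lemma root_cone (v : V) : v ∈ Cone E r := ⟨(hr v).exists.choose, (hr v).exists.choose_spec⟩

lemma cone_antisymm {v w : V} (h1 : v ∈ Cone E w) (h2 : w ∈ Cone E v) : v = w := by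
  obtain ⟨p, hp⟩ := h1
  obtain ⟨q, hq⟩ := h2
  obtain ⟨lw, hlw⟩ := root_cone hr w
  have h1' : IsEdgePath E r (lw ++ (p ++ q)) w :=
    path_append hlw (path_append hp hq)
  have : lw = lw ++ (p ++ q) := (hr w).unique hlw h1'
  have hlen := congrArg List.length this
  simp only [List.length_append] at hlen
  have hp0 : p = [] := by
    have : p.length = 0 := by omega
    exact List.length_eq_zero_iff.mp this
  subst hp0
  exact hp.symm

lemma no_self_loop {v : V} {d : D} (h : (v, d, v) ∈ E) : False := by
  obtain ⟨lv, hlv⟩ := root_cone hr v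
  have h2 : IsEdgePath E r (lv ++ [(v, d, v)]) v :=
    path_append hlv ⟨h, rfl, rfl⟩
  have := (hr v).unique hlv h2
  have hlen := congrArg List.length this
  simp at hlen

lemma parent_unique {p p' x : V} {d d' : D}
    (h : (p, d, x) ∈ E) (h' : (p', d', x) ∈ E) : p = p' ∧ d = d' := by
  obtain ⟨lp, hlp⟩ := root_cone hr p
  obtain ⟨lp', hlp'⟩ := root_cone hr p'
  have h1 : IsEdgePath E r (lp ++ [(p, d, x)]) x := path_append hlp ⟨h, rfl, rfl⟩
  have h2 : IsEdgePath E r (lp' ++ [(p', d', x)]) x := path_append hlp' ⟨h', rfl, rfl⟩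
  have heq : lp ++ [(p, d, x)] = lp' ++ [(p', d', x)] := by
    have u1 := (hr x).unique h1 h2
    exact u1
  have := congrArg List.reverse heq
  simp only [List.reverse_append, List.reverse_cons, List.reverse_nil, List.nil_append,
    List.singleton_append, List.cons.injEq] at this
  obtain ⟨he, -⟩ := this
  exact ⟨(Prod.ext_iff.mp he).1, ((Prod.ext_iff.mp (Prod.ext_iff.mp he).2).1)⟩

/-- If `x` is in the cone of `u`, `x ≠ u`, and `p` is the parent of `x`, then
`p` is still in the cone of `u`. -/
lemma cone_parent {u x p : V} {d : D} (hx : x ∈ Cone E u) (hne : x ≠ u)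
    (hp : (p, d, x) ∈ E) : p ∈ Cone E u := by
  obtain ⟨l, hl⟩ := hx
  rcases List.eq_nil_or_concat l with rfl | ⟨l', e, rfl⟩
  all_goals try rw [List.concat_eq_append] at hl
  · exact absurd hl.symm hne
  · obtain ⟨m, hm1, hm2⟩ := path_split (l1 := l') hl
    obtain ⟨he, he1, he2⟩ := hm2
    have he2' : e.2.2 = x := he2
    have hE : (m, e.2.1, x) ∈ E := by
      have : e = (m, e.2.1, x) := by
        rw [← he1, ← he2']
      rw [← this]; exact he
    obtain ⟨hpm, -⟩ := parent_unique hr hp hE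
    rw [hpm]; exact ⟨l', hm1⟩

/-- If `x ∈ Cone u` and `x ≠ u`, then `x` is in the cone of a child of `u`. -/
lemma cone_child {u x : V} (hx : x ∈ Cone E u) (hne : x ≠ u) :
    ∃ d c, (u, d, c) ∈ E ∧ x ∈ Cone E c := by
  obtain ⟨l, hl⟩ := hx
  rcases l with _ | ⟨e, l'⟩
  · exact absurd hl.symm hne
  · obtain ⟨he, he1, he2⟩ := hl
    refine ⟨e.2.1, e.2.2, ?_, ⟨l', he2⟩⟩
    have : e = (u, e.2.1, e.2.2) := by rw [← he1]
    rw [← this]; exact he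

lemma child_cone_unique {u c c' x : V} {d d' : D}
    (h : (u, d, c) ∈ E) (h' : (u, d', c') ∈ E)
    (hx : x ∈ Cone E c) (hx' : x ∈ Cone E c') : c = c' := by
  obtain ⟨p, hp⟩ := hx
  obtain ⟨p', hp'⟩ := hx'
  obtain ⟨lu, hlu⟩ := root_cone hr u
  have h1 : IsEdgePath E r (lu ++ ((u, d, c) :: p)) x :=
    path_append hlu ⟨h, rfl, hp⟩
  have h2 : IsEdgePath E r (lu ++ ((u, d', c') :: p')) x :=
    path_append hlu ⟨h', rfl, hp'⟩
  have heq := (hr x).unique h1 h2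
  have := List.append_cancel_left heq
  simp only [List.cons.injEq, Prod.mk.injEq] at this
  exact this.1.2.2

lemma cone_root_path_prefix {u w : V} (lu lw : List (V × D × V))
    (hlu : IsEdgePath E r lu u) (hlw : IsEdgePath E r lw w)
    (h : w ∈ Cone E u) : lu <+: lw := by
  obtain ⟨p, hp⟩ := h
  exact ⟨p, ((hr w).unique (path_append hlu hp) hlw : lu ++ p = lw)⟩

lemma cone_of_prefix {u w : V} (lu lw : List (V × D × V))
    (hlu : IsEdgePath E r lu u) (hlw : IsEdgePath E r lw w)
    (h : lu <+: lw) : w ∈ Cone E u := by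
  obtain ⟨q, hq⟩ := h
  subst hq
  obtain ⟨m, hm1, hm2⟩ := path_split (l1 := lu) hlw
  have : m = u := path_end hm1 hlu
  subst this
  exact ⟨q, hm2⟩

lemma cone_comparable {u v x : V} (hu : x ∈ Cone E u) (hv : x ∈ Cone E v) :
    u ∈ Cone E v ∨ v ∈ Cone E u := by
  obtain ⟨lu, hlu⟩ := root_cone hr u
  obtain ⟨lv, hlv⟩ := root_cone hr v
  obtain ⟨lx, hlx⟩ := root_cone hr x
  have pu := cone_root_path_prefix hr lu lx hlu hlx hu
  have pv := cone_root_path_prefix hr lv lx hlv hlx hv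
  rcases List.prefix_or_prefix_of_prefix pu pv with h | h
  · exact Or.inr (cone_of_prefix hr lu lv hlu hlv h)
  · exact Or.inl (cone_of_prefix hr lv lu hlv hlu h)

lemma ancestors_finite (w : V) : {u : V | w ∈ Cone E u}.Finite := by
  obtain ⟨lw, hlw⟩ := root_cone hr w
  have key : ∀ u ∈ {u : V | w ∈ Cone E u}, ∃ l, IsEdgePath E r l u ∧ l <+: lw := by
    intro u hu
    obtain ⟨lu, hlu⟩ := root_cone hr u
    exact ⟨lu, hlu, cone_root_path_prefix hr lu lw hlu hlw hu⟩
  classical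
  set f : V → ℕ := fun u => if h : ∃ l, IsEdgePath E r l u ∧ l <+: lw then h.choose.length else 0
  apply Set.Finite.of_finite_image (f := f)
  · apply Set.Finite.subset (Set.finite_Iic lw.length)
    rintro n ⟨u, hu, rfl⟩
    obtain h := key u hu
    simp only [f, dif_pos h]
    exact h.choose_spec.2.length_le
  · intro a ha b hb hab
    obtain h1 := key a ha
    obtain h2 := key b hb
    simp only [f, dif_pos h1, dif_pos h2] at hab
    obtain ⟨hl1, hp1⟩ := h1.choose_spec
    obtain ⟨hl2, hp2⟩ := h2.choose_spec
    have : h1.choose = h2.choose := by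
      rcases List.prefix_or_prefix_of_prefix hp1 hp2 with h | h
      · exact h.eq_of_length hab
      · exact (h.eq_of_length hab.symm).symm
    rw [this] at hl1
    exact path_end hl1 hl2

end TreeOmegaAux2
section TreeOmegaAux3
set_option linter.unusedSectionVars false

variable {V D Q : Type*} {E : Set (V × D × V)}

lemma marks_append {α : List (D ⊕ D)} :
    ∀ {β : List (D ⊕ D)} {v u w : V},
      Marks E v α u → Marks E u β w → Marks E v (α ++ β) w := by
  induction α with
  | nil => intro β v u w h h'; cases h; exact h'
  | cons c α ih =>
      intro β v u w h h'
      obtain ⟨x, hx, hm⟩ := h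
      exact ⟨x, hx, ih hm h'⟩

lemma autRun_append {Δ : Set (Q × (D ⊕ D) × Q)} {α : List (D ⊕ D)} :
    ∀ {β : List (D ⊕ D)} {q qm q' : Q},
      AutRun Δ q α qm → AutRun Δ qm β q' → AutRun Δ q (α ++ β) q' := by
  induction α with
  | nil => intro β q qm q' h h'; cases h; exact h'
  | cons c α ih =>
      intro β q qm q' h h'
      obtain ⟨q'', hq, hrun⟩ := h
      exact ⟨q'', hq, ih hrun h'⟩

lemma autRun_split {Δ : Set (Q × (D ⊕ D) × Q)} {α : List (D ⊕ D)} :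
    ∀ {β : List (D ⊕ D)} {q q' : Q},
      AutRun Δ q (α ++ β) q' → ∃ qm, AutRun Δ q α qm ∧ AutRun Δ qm β q' := by
  induction α with
  | nil => intro β q q' h; exact ⟨q, rfl, h⟩
  | cons c α ih =>
      intro β q q' h
      obtain ⟨q'', hq, hrun⟩ := h
      obtain ⟨qm, h1, h2⟩ := ih hrun
      exact ⟨qm, ⟨q'', hq, h1⟩, h2⟩

lemma switch_comp {Δ : Set (Q × (D ⊕ D) × Q)} {q qm q' : Q} {x u y : V}
    (h1 : Switch E Δ q qm x u) (h2 : Switch E Δ qm q' u y) : Switch E Δ q q' x y := by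
  obtain ⟨α, hα1, hα2⟩ := h1
  obtain ⟨β, hβ1, hβ2⟩ := h2
  exact ⟨α ++ β, marks_append hα1 hβ1, autRun_append hα2 hβ2⟩

variable {r : V} (hr : ∀ v : V, ∃! l : List (V × D × V), IsEdgePath E r l v)

include hr

/-- Any walk in `R(T)` from inside `Cone u` to outside `Cone u` passes
through `u`. -/
lemma marks_exit {α : List (D ⊕ D)} :
    ∀ {x y u : V}, x ∈ Cone E u → y ∉ Cone E u → Marks E x α y →
      ∃ α1 α2, α = α1 ++ α2 ∧ Marks E x α1 u ∧ Marks E u α2 y := by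
  induction α with
  | nil =>
      intro x y u hx hy h
      cases h
      exact absurd hx hy
  | cons c α ih =>
      intro x y u hx hy h
      by_cases hxu : x = u
      · subst hxu
        exact ⟨[], c :: α, rfl, rfl, h⟩
      · obtain ⟨x', hstep, hm⟩ := h
        have hx' : x' ∈ Cone E u := by
          cases c with
          | inl d => exact cone_trans hx ⟨[(x, d, x')], hstep, rfl, rfl⟩
          | inr d => exact cone_parent hr hx hxu hstep
        obtain ⟨α1, α2, rfl, h1, h2⟩ := ih hx' hy hm
        exact ⟨c :: α1, α2, rfl, ⟨x', hstep, h1⟩, h2⟩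

lemma switch_exit {Δ : Set (Q × (D ⊕ D) × Q)} {q q' : Q} {x y u : V}
    (hx : x ∈ Cone E u) (hy : y ∉ Cone E u) (h : Switch E Δ q q' x y) :
    ∃ qm, Switch E Δ q qm x u ∧ Switch E Δ qm q' u y := by
  obtain ⟨α, hm, hrun⟩ := h
  obtain ⟨α1, α2, rfl, h1, h2⟩ := marks_exit hr hx hy hm
  obtain ⟨qm, hr1, hr2⟩ := autRun_split hrun
  exact ⟨qm, ⟨α1, h1, hr1⟩, ⟨α2, h2, hr2⟩⟩

end TreeOmegaAux3
section TreeOmegaAux4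
set_option linter.unusedSectionVars false

variable {V : Type*} {R : V → V → Prop}

lemma rel_asymm (htr : Transitive R) (hirr : ∀ v, ¬ R v v) {a b : V}
    (h : R a b) : ¬ R b a := fun h' => hirr a (htr h h')

lemma finset_max (htr : Transitive R) (htri : ∀ a b : V, R a b ∨ a = b ∨ R b a)
    {s : Finset V} (hs : s.Nonempty) : ∃ m ∈ s, ∀ x ∈ s, x = m ∨ R x m := by
  classical
  induction s using Finset.induction_on with
  | empty => exact absurd hs (by simp)
  | @insert a s hnotmem ih =>
      rcases s.eq_empty_or_nonempty with rfl | hs'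
      · exact ⟨a, by simp, by simp⟩
      · obtain ⟨m, hm, hmax⟩ := ih hs'
        rcases htri a m with h | h | h
        · refine ⟨m, by simp [hm], ?_⟩
          intro x hx
          rcases Finset.mem_insert.mp hx with rfl | hx
          · exact Or.inr h
          · exact hmax x hx
        · subst h
          refine ⟨a, by simp, ?_⟩
          intro x hx
          rcases Finset.mem_insert.mp hx with rfl | hx
          · exact Or.inl rfl
          · exact hmax x hx
        · refine ⟨a, by simp, ?_⟩
          intro x hx
          rcases Finset.mem_insert.mp hx with rfl | hx
          · exact Or.inl rfl
          · rcases hmax x hx with rfl | hx'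
            · exact Or.inr h
            · exact Or.inr (htr hx' h)

lemma cofinal_mem {B : Set V} {v0 : V} (hB : CofinalIn R B v0)
    (hlim : IsLimitPt R v0) : ∃ b, b ∈ B ∧ R b v0 := by
  obtain ⟨v, hv⟩ := hlim.1
  obtain ⟨b, hb, -⟩ := hB.2 v hv
  exact ⟨b, hb, hB.1 b hb⟩

lemma cofinal_split (htr : Transitive R) (htri : ∀ a b : V, R a b ∨ a = b ∨ R b a)
    {ι : Type*} [Finite ι] {B : Set V} {v0 : V}
    (hB : CofinalIn R B v0) (hlim : IsLimitPt R v0) (f : V → ι) :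
    ∃ t : ι, CofinalIn R {b | b ∈ B ∧ f b = t} v0 := by
  classical
  by_contra hcon
  push_neg at hcon
  have hbnd : ∀ t : ι, ∃ v, R v v0 ∧ ∀ b, b ∈ B ∧ f b = t → ¬(b = v ∨ R v b) := by
    intro t
    have h1 : ∀ b ∈ {b | b ∈ B ∧ f b = t}, R b v0 := fun b hb => hB.1 b hb.1
    have h2 : ¬ ∀ v, R v v0 → ∃ b ∈ {b | b ∈ B ∧ f b = t}, (b = v ∨ R v b) :=
      fun hC => hcon t ⟨h1, hC⟩
    push_neg at h2
    obtain ⟨v, hv1, hv2⟩ := h2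
    refine ⟨v, hv1, fun b hb hor => ?_⟩
    obtain ⟨h3, h4⟩ := hv2 b hb
    rcases hor with h | h
    · exact h3 h
    · exact h4 h
  choose g hg1 hg2 using hbnd
  obtain ⟨b0, hb0, -⟩ := cofinal_mem hB hlim
  haveI : Nonempty ι := ⟨f b0⟩
  haveI : Fintype ι := Fintype.ofFinite ι
  obtain ⟨m, hm, hmax⟩ := finset_max htr htri
    (s := Finset.univ.image g) (by simp [Finset.image_nonempty])
  obtain ⟨t0, -, ht0⟩ := Finset.mem_image.mp hm
  have hmv0 : R m v0 := ht0 ▸ hg1 t0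
  obtain ⟨b, hb, hor⟩ := hB.2 m hmv0
  have hbound := hg2 (f b) b ⟨hb, rfl⟩
  have hgs : g (f b) ∈ Finset.univ.image g := Finset.mem_image_of_mem g (Finset.mem_univ _)
  rcases hmax _ hgs with heq | hlt
  · rw [heq] at hbound
    exact hbound hor
  · apply hbound
    rcases hor with rfl | h
    · exact Or.inr hlt
    · exact Or.inr (htr hlt h)

lemma cofinal_erase (htr : Transitive R) (hirr : ∀ v, ¬ R v v)
    {B : Set V} {v0 w : V} (hB : CofinalIn R B v0) (hlim : IsLimitPt R v0) :
    CofinalIn R (B \ {w}) v0 := by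
  refine ⟨fun b hb => hB.1 b hb.1, fun v hv => ?_⟩
  obtain ⟨v1, hvv1, hv1v0⟩ := hlim.2 v hv
  obtain ⟨b, hb, hor⟩ := hB.2 v1 hv1v0
  have hvb : R v b := by rcases hor with rfl | h; exacts [hvv1, htr hvv1 h]
  by_cases hbw : b = w
  · subst hbw
    have hbv0 : R b v0 := hB.1 b hb
    obtain ⟨v2, hbv2, hv2v0⟩ := hlim.2 b hbv0
    obtain ⟨b2, hb2, hor2⟩ := hB.2 v2 hv2v0
    have hbb2 : R b b2 := by rcases hor2 with rfl | h; exacts [hbv2, htr hbv2 h]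
    have hne : b2 ≠ b := fun h => hirr b (h ▸ hbb2)
    exact ⟨b2, ⟨hb2, hne⟩, Or.inr (htr hvb hbb2)⟩
  · exact ⟨b, ⟨hb, hbw⟩, Or.inr hvb⟩

end TreeOmegaAux4
section TreeOmegaAux5
set_option linter.unusedSectionVars false

variable {V D Q : Type*} [Fintype D] [Fintype Q]
  {E : Set (V × D × V)} (hdet : IsDeterministic E)
  {r : V} (hr : ∀ v : V, ∃! l : List (V × D × V), IsEdgePath E r l v)
  {Δ : Set (Q × (D ⊕ D) × Q)} {qI qc : Q}
  (hwo : IsWellOrder V (Switch E Δ qI qc))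
  {v0 : V} (hlim : IsLimitPt (Switch E Δ qI qc) v0)

lemma R_trans (hwo : IsWellOrder V (Switch E Δ qI qc)) :
    Transitive (Switch E Δ qI qc) :=
  fun a b c hab hbc => by haveI := hwo; exact trans_of (Switch E Δ qI qc) hab hbc

lemma R_tri (hwo : IsWellOrder V (Switch E Δ qI qc)) :
    ∀ a b : V, Switch E Δ qI qc a b ∨ a = b ∨ Switch E Δ qI qc b a :=
  by haveI := hwo; exact trichotomous_of (Switch E Δ qI qc)

lemma R_irrefl (hwo : IsWellOrder V (Switch E Δ qI qc)) :
    ∀ v : V, ¬ Switch E Δ qI qc v v :=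
  fun v hv => hwo.wf.isIrrefl.irrefl v hv

include hdet hr hwo hlim in
lemma step_child {u : V} (hu : u ∈ Sset E (Switch E Δ qI qc) v0) :
    ∃ d c, (u, d, c) ∈ E ∧ c ∈ Sset E (Switch E Δ qI qc) v0 := by
  classical
  obtain ⟨B, hBsub, hBcof⟩ := hu
  have hB' : CofinalIn (Switch E Δ qI qc) (B \ {u}) v0 :=
    cofinal_erase (R_trans hwo) (R_irrefl hwo) hBcof hlim
  obtain ⟨b0, hb0, -⟩ := cofinal_mem hB' hlim
  have hb0u : b0 ∈ Cone E u := hBsub hb0.1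
  have hb0ne : b0 ≠ u := fun h => hb0.2 (Set.mem_singleton_iff.mpr h)
  obtain ⟨d0, c0, hc0E, -⟩ := cone_child hr hb0u hb0ne
  haveI : Nonempty {c : V // ∃ d, (u, d, c) ∈ E} := ⟨⟨c0, d0, hc0E⟩⟩
  haveI : Finite {c : V // ∃ d, (u, d, c) ∈ E} := by
    apply Finite.of_injective (fun c => c.2.choose)
    intro c1 c2 h
    have h' : c1.2.choose = c2.2.choose := h
    have h1 := c1.2.choose_spec
    have h2 := c2.2.choose_spec
    rw [h'] at h1
    exact Subtype.ext (hdet u c2.2.choose _ _ h1 h2)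
  set f : V → {c : V // ∃ d, (u, d, c) ∈ E} := fun b =>
    if h : ∃ c : {c : V // ∃ d, (u, d, c) ∈ E}, b ∈ Cone E c.1 then h.choose
    else Classical.arbitrary _ with hf
  obtain ⟨t, ht⟩ := cofinal_split (R_trans hwo) (R_tri hwo) hB' hlim f
  refine ⟨t.2.choose, t.1, t.2.choose_spec, ⟨{b | b ∈ B \ {u} ∧ f b = t}, ?_, ht⟩⟩
  intro b hb
  have hbC : b ∈ Cone E u := hBsub hb.1.1
  have hbne : b ≠ u := fun h => hb.1.2 (Set.mem_singleton_iff.mpr h)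
  obtain ⟨d, c, hcE, hbc⟩ := cone_child hr hbC hbne
  have hex : ∃ c : {c : V // ∃ d, (u, d, c) ∈ E}, b ∈ Cone E c.1 := ⟨⟨c, d, hcE⟩, hbc⟩
  have hft : f b = t := hb.2
  rw [← hft]
  simp only [hf, dif_pos hex]
  exact hex.choose_spec

include hr hwo hlim in
lemma S_comparable {u v : V} (hu : u ∈ Sset E (Switch E Δ qI qc) v0)
    (hv : v ∈ Sset E (Switch E Δ qI qc) v0) :
    u ∈ Cone E v ∨ v ∈ Cone E u := by
  classical
  by_contra hcon
  push_neg at hcon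
  obtain ⟨hc1, hc2⟩ := hcon
  have hdisj : ∀ x, x ∈ Cone E u → x ∉ Cone E v := fun x hxu hxv =>
    (cone_comparable hr hxu hxv).elim (fun h => hc1 h) (fun h => hc2 h)
  obtain ⟨Bu, hBu, hBucof⟩ := hu
  obtain ⟨Bv, hBv, hBvcof⟩ := hv
  set f : V → Set (Q × Q) := fun b => {p | Switch E Δ p.1 p.2 b u} with hfdef
  obtain ⟨t, ht⟩ := cofinal_split (R_trans hwo) (R_tri hwo) hBucof hlim f
  obtain ⟨b1, hb1, hb1v0⟩ := cofinal_mem ht hlim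
  obtain ⟨y, hy, hory⟩ := hBvcof.2 b1 hb1v0
  have hb1u : b1 ∈ Cone E u := hBu hb1.1
  have hyv : y ∈ Cone E v := hBv hy
  have hyne : y ≠ b1 := fun h => hdisj b1 hb1u (h ▸ hyv)
  have hb1y : Switch E Δ qI qc b1 y := by
    rcases hory with h | h
    · exact absurd h hyne
    · exact h
  have hyv0 : Switch E Δ qI qc y v0 := hBvcof.1 y hy
  obtain ⟨b2, hb2, horb2⟩ := ht.2 y hyv0
  have hb2u : b2 ∈ Cone E u := hBu hb2.1
  have hb2ne : b2 ≠ y := fun h => hdisj b2 hb2u (h ▸ hyv)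
  have hyb2 : Switch E Δ qI qc y b2 := by
    rcases horb2 with h | h
    · exact absurd h hb2ne
    · exact h
  have hynotu : y ∉ Cone E u := fun h => hdisj y h hyv
  obtain ⟨qm, hswa, hswb⟩ := switch_exit hr hb1u hynotu hb1y
  have hfeq : f b1 = f b2 := hb1.2.trans hb2.2.symm
  have hsw2 : Switch E Δ qI qm b2 u := by
    have hmem : (qI, qm) ∈ f b1 := hswa
    rw [hfeq] at hmem
    exact hmem
  have hb2y : Switch E Δ qI qc b2 y := switch_comp hsw2 hswb
  exact rel_asymm (R_trans hwo) (R_irrefl hwo) hyb2 hb2y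

include hdet hr hwo hlim in
lemma exists_P (n : ℕ) : ∀ u : V, u ∈ Sset E (Switch E Δ qI qc) v0 →
    ∀ l : List (V × D × V), IsEdgePath E u l v0 → l.length ≤ n →
    ∃ p, p ∈ Pset E (Switch E Δ qI qc) v0 := by
  induction n with
  | zero =>
      intro u hu l hl hlen
      obtain ⟨d, c, hcE, hcS⟩ := step_child hdet hr hwo hlim hu
      by_cases hv0c : v0 ∈ Cone E c
      · exfalso
        have hl0 : l = [] := List.length_eq_zero_iff.mp (Nat.le_zero.mp hlen)
        subst hl0
        have huv0 : u = v0 := hl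
        subst huv0
        have hcu : c ∈ Cone E u := ⟨[(u, d, c)], hcE, rfl, rfl⟩
        have := cone_antisymm hr hcu hv0c
        subst this
        exact no_self_loop hr hcE
      · exact ⟨c, hcS, hv0c⟩
  | succ n ih =>
      intro u hu l hl hlen
      obtain ⟨d, c, hcE, hcS⟩ := step_child hdet hr hwo hlim hu
      by_cases hv0c : v0 ∈ Cone E c
      · rcases l with _ | ⟨e, l'⟩
        · exfalso
          have huv0 : u = v0 := hl
          subst huv0
          have hcu : c ∈ Cone E u := ⟨[(u, d, c)], hcE, rfl, rfl⟩
          have := cone_antisymm hr hcu hv0c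
          subst this
          exact no_self_loop hr hcE
        · obtain ⟨heE, he1, he2⟩ := hl
          have heE' : (u, e.2.1, e.2.2) ∈ E := by
            have : e = (u, e.2.1, e.2.2) := by rw [← he1]
            rw [← this]; exact heE
          have hv0e : v0 ∈ Cone E e.2.2 := ⟨l', he2⟩
          have hce : c = e.2.2 := child_cone_unique hr hcE heE' hv0c hv0e
          apply ih c hcS l' (hce ▸ he2)
          simpa using Nat.le_of_succ_le_succ (by simpa using hlen)
      · exact ⟨c, hcS, hv0c⟩

include hdet hr hwo hlim in
lemma P_nonempty : ∃ p, p ∈ Pset E (Switch E Δ qI qc) v0 := by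
  have hrS : r ∈ Sset E (Switch E Δ qI qc) v0 := by
    refine ⟨{v | Switch E Δ qI qc v v0}, fun v _ => root_cone hr v, ?_, ?_⟩
    · intro b hb; exact hb
    · intro v hv; exact ⟨v, hv, Or.inl rfl⟩
  obtain ⟨l, hl⟩ := root_cone hr v0
  exact exists_P hdet hr hwo hlim l.length r hrS l hl le_rfl

include hdet hr hwo hlim in
lemma P_no_max {w : V} (hw : w ∈ Pset E (Switch E Δ qI qc) v0) :
    ∃ c, c ∈ Pset E (Switch E Δ qI qc) v0 ∧ w ≠ c ∧ c ∈ Cone E w := by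
  obtain ⟨d, c, hcE, hcS⟩ := step_child hdet hr hwo hlim hw.1
  have hcw : c ∈ Cone E w := ⟨[(w, d, c)], hcE, rfl, rfl⟩
  have hne : w ≠ c := by
    rintro rfl
    exact no_self_loop hr hcE
  refine ⟨c, ⟨hcS, fun hv0 => hw.2 (cone_trans hcw hv0)⟩, hne, hcw⟩

end TreeOmegaAux5
section OmegaIso

theorem omega_orderIso {A : Type*} (lt : A → A → Prop)
    (hirr : ∀ a, ¬ lt a a)
    (htr : ∀ {a b c}, lt a b → lt b c → lt a c)
    (htri : ∀ a b, a = b ∨ lt a b ∨ lt b a)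
    (hfin : ∀ a, {b | lt b a}.Finite)
    (hne : Nonempty A)
    (hnomax : ∀ a, ∃ b, lt a b) :
    ∃ e : A ≃ ℕ, ∀ a b, lt a b ↔ e a < e b := by
  classical
  set f : A → ℕ := fun a => (hfin a).toFinset.card with hf
  have hmono : ∀ {a b}, lt a b → f a < f b := by
    intro a b hab
    apply Finset.card_lt_card
    rw [Finset.ssubset_iff_of_subset]
    · exact ⟨a, by simp [Set.Finite.mem_toFinset, hab], by simp [Set.Finite.mem_toFinset, hirr a]⟩
    · intro x hx
      simp only [Set.Finite.mem_toFinset, Set.mem_setOf_eq] at hx ⊢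
      exact htr hx hab
  have hiff : ∀ a b, lt a b ↔ f a < f b := by
    intro a b
    constructor
    · exact hmono
    · intro h
      rcases htri a b with rfl | hab | hba
      · omega
      · exact hab
      · have := hmono hba; omega
  have hinj : Function.Injective f := by
    intro a b h
    rcases htri a b with rfl | hab | hba
    · rfl
    · have := hmono hab; omega
    · have := hmono hba; omega
  have hwf : WellFounded lt :=
    Subrelation.wf (fun {a b} h => hmono h) (InvImage.wf f Nat.lt_wfRel.wf)
  have hsurj : ∀ n : ℕ, ∃ a, f a = n := by
    intro n
    induction n with
    | zero =>
        obtain ⟨a0⟩ := hne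
        set m := hwf.min Set.univ ⟨a0, trivial⟩ with hm
        refine ⟨m, ?_⟩
        have hempty : {b | lt b m} = ∅ := by
          ext b
          simp only [Set.mem_setOf_eq, Set.mem_empty_iff_false, iff_false]
          exact fun hb => hwf.not_lt_min Set.univ trivial hb
        simp only [hf]
        rw [Finset.card_eq_zero, ← Finset.not_nonempty_iff_eq_empty]
        intro ⟨x, hx⟩
        rw [Set.Finite.mem_toFinset, hempty] at hx
        exact hx
    | succ n ihn =>
        obtain ⟨a, ha⟩ := ihn
        have hane : {b | lt a b}.Nonempty := hnomax a
        set m := hwf.min {b | lt a b} hane with hm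
        have ham : lt a m := hwf.min_mem {b | lt a b} hane
        have hset : {b | lt b m} = insert a {b | lt b a} := by
          ext x
          simp only [Set.mem_setOf_eq, Set.mem_insert_iff]
          constructor
          · intro hxm
            rcases htri x a with rfl | hxa | hax
            · exact Or.inl rfl
            · exact Or.inr hxa
            · exact absurd hxm (hwf.not_lt_min {b | lt a b} hax)
          · rintro (rfl | hxa)
            · exact ham
            · exact htr hxa ham
        refine ⟨m, ?_⟩
        have : (hfin m).toFinset = insert a (hfin a).toFinset := by
          ext x
          simp only [Set.Finite.mem_toFinset, Finset.mem_insert, hset, Set.mem_insert_iff]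
        simp only [hf] at ha ⊢
        rw [this, Finset.card_insert_of_notMem (by simp [Set.Finite.mem_toFinset, hirr a]), ha]
  exact ⟨Equiv.ofBijective f ⟨hinj, fun n => hsurj n⟩, fun a b => hiff a b⟩

end OmegaIso
/-- Deterministic-tree setup: `T` is a deterministic tree over a finite color
set `D`, `B` is a nondeterministic finite automaton over `D ⊕ D⁻` with
distinguished states `qI, qc`, and the relation
`R_c v1 v2 := B can switch from qI to qc on a path from v1 to v2 in R(T)`
is a strict well-order on the vertices. Then for every `R_c`-limit point `v0`,
the relation `⊏` on `P_{v0}` given by `w1 ⊏ w2 ↔ w1 ≠ w2 ∧ w2 ∈ Cone(w1)` is a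
strict linear order of order type `ω`, i.e. `(P_{v0}, ⊏)` is order-isomorphic
to `(ℕ, <)`. -/
theorem Pset_orderType_omega {V D Q : Type*} [Fintype D] [Fintype Q]
    (E : Set (V × D × V)) (hTree : IsTree E) (hdet : IsDeterministic E)
    (Δ : Set (Q × (D ⊕ D) × Q)) (qI qc : Q)
    (hwo : IsWellOrder V (Switch E Δ qI qc))
    (v0 : V) (hlim : IsLimitPt (Switch E Δ qI qc) v0) :
    ∃ e : {w // w ∈ Pset E (Switch E Δ qI qc) v0} ≃ ℕ,
      ∀ w1 w2 : {w // w ∈ Pset E (Switch E Δ qI qc) v0},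
        ((w1 : V) ≠ (w2 : V) ∧ (w2 : V) ∈ Cone E (w1 : V)) ↔ e w1 < e w2 := by
  obtain ⟨r, hr⟩ := hTree
  set A := {w // w ∈ Pset E (Switch E Δ qI qc) v0} with hA
  set lt : A → A → Prop := fun a b => (a : V) ≠ (b : V) ∧ (b : V) ∈ Cone E (a : V) with hlt
  have hirr : ∀ a : A, ¬ lt a a := fun a h => h.1 rfl
  have htr : ∀ {a b c : A}, lt a b → lt b c → lt a c := by
    intro a b c hab hbc
    refine ⟨?_, cone_trans hab.2 hbc.2⟩
    intro hac
    have hba : (a : V) ∈ Cone E (b : V) := hac ▸ hbc.2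
    exact hab.1 (cone_antisymm hr hab.2 hba).symm
  have htri : ∀ a b : A, a = b ∨ lt a b ∨ lt b a := by
    intro a b
    by_cases hab : (a : V) = (b : V)
    · exact Or.inl (Subtype.ext hab)
    · rcases S_comparable hr hwo hlim a.2.1 b.2.1 with h | h
      · exact Or.inr (Or.inr ⟨fun he => hab he.symm, h⟩)
      · exact Or.inr (Or.inl ⟨hab, h⟩)
  have hfin : ∀ a : A, {b : A | lt b a}.Finite := by
    intro a
    have hsub : {b : A | lt b a} ⊆ Subtype.val ⁻¹' {u : V | (a : V) ∈ Cone E u} :=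
      fun b hb => hb.2
    exact Set.Finite.subset
      ((ancestors_finite hr (a : V)).preimage (Set.injOn_of_injective Subtype.val_injective))
      hsub
  have hne : Nonempty A := by
    obtain ⟨p, hp⟩ := P_nonempty hdet hr hwo hlim
    exact ⟨⟨p, hp⟩⟩
  have hnomax : ∀ a : A, ∃ b : A, lt a b := by
    intro a
    obtain ⟨c, hc, hne', hcone⟩ := P_no_max hdet hr hwo hlim a.2
    exact ⟨⟨c, hc⟩, hne', hcone⟩
  obtain ⟨e, he⟩ := omega_orderIso lt hirr htr htri hfin hne hnomax
  exact ⟨e, fun w1 w2 => he w1 w2⟩
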